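/- Let m ≥ 2 and let x < m be a positive integer relatively prime to m, and let m/x = n_1 + 1/(n_2 + 1/(⋯ + 1/n_l)) be a regular continued fraction expansion with all n_j ≥ 1. Let y < m be the unique positive integer with x·y ≡ (−1)^{l+1} (mod m). Then m/y = n_l + 1/(n_{l−1} + 1/(⋯ + 1/n_1)). -/

import Mathlib

open Matrix


/-- value of the regular continued fraction `n₁ + 1/(n₂ + 1/(⋯ + 1/n_l))`
(the empty continued fraction has value `0`, and `1/0 = 0` in `ℚ` makes the
singleton case evaluate to `n₁`). -/
def cfEval : List ℤ → ℚ
  | [] => 0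
  | n :: ns => (n : ℚ) + 1 / cfEval ns

/-- The continuant matrix of a continued fraction. -/
def Mcf (ns : List ℤ) : Matrix (Fin 2) (Fin 2) ℤ :=
  (ns.map fun a => !![a, 1; 1, 0]).prod

lemma Mcf_nil : Mcf [] = 1 := rfl

lemma Mcf_cons (a : ℤ) (t : List ℤ) : Mcf (a :: t) = !![a, 1; 1, 0] * Mcf t := by
  simp [Mcf]

lemma Mcf_cons00 (a : ℤ) (t : List ℤ) :
    Mcf (a :: t) 0 0 = a * Mcf t 0 0 + Mcf t 1 0 := by
  simp [Mcf_cons, Matrix.mul_apply, Fin.sum_univ_two]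

lemma Mcf_cons01 (a : ℤ) (t : List ℤ) :
    Mcf (a :: t) 0 1 = a * Mcf t 0 1 + Mcf t 1 1 := by
  simp [Mcf_cons, Matrix.mul_apply, Fin.sum_univ_two]

lemma Mcf_cons10 (a : ℤ) (t : List ℤ) : Mcf (a :: t) 1 0 = Mcf t 0 0 := by
  simp [Mcf_cons, Matrix.mul_apply, Fin.sum_univ_two]

lemma Mcf_cons11 (a : ℤ) (t : List ℤ) : Mcf (a :: t) 1 1 = Mcf t 0 1 := by
  simp [Mcf_cons, Matrix.mul_apply, Fin.sum_univ_two]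

lemma Mcf_reverse (ns : List ℤ) : Mcf ns.reverse = (Mcf ns)ᵀ := by
  induction ns with
  | nil => simp [Mcf]
  | cons a t ih =>
    have happ : Mcf (t.reverse ++ [a]) = Mcf t.reverse * Mcf [a] := by
      simp [Mcf, List.map_append]
    have hsym : Matrix.transpose !![a, (1:ℤ); 1, 0] = !![a, 1; 1, 0] := by
      ext i j; fin_cases i <;> fin_cases j <;> rfl
    have ha : Mcf [a] = !![a, 1; 1, 0] := by simp [Mcf]
    rw [List.reverse_cons, happ, ih, ha, Mcf_cons, Matrix.transpose_mul, hsym]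

lemma Mcf_det (ns : List ℤ) : (Mcf ns).det = (-1) ^ ns.length := by
  induction ns with
  | nil => simp [Mcf]
  | cons a t ih =>
    rw [Mcf_cons, Matrix.det_mul, ih, Matrix.det_fin_two_of]
    simp only [List.length_cons, pow_succ]
    ring

lemma Mcf_pos (ns : List ℤ) (h : ∀ n ∈ ns, 1 ≤ n) (hne : ns ≠ []) :
    1 ≤ Mcf ns 0 0 ∧ 1 ≤ Mcf ns 0 1 ∧ 1 ≤ Mcf ns 1 0 ∧ 0 ≤ Mcf ns 1 1 ∧
    Mcf ns 0 1 ≤ Mcf ns 0 0 ∧ Mcf ns 1 1 ≤ Mcf ns 1 0 ∧ Mcf ns 1 0 ≤ Mcf ns 0 0 := by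
  induction ns with
  | nil => exact absurd rfl hne
  | cons a t ih =>
    have ha : 1 ≤ a := h a List.mem_cons_self
    rcases eq_or_ne t [] with rfl | htne
    · simp [Mcf, Matrix.mul_apply, Fin.sum_univ_two]
      omega
    · obtain ⟨h1, h2, h3, h4, h5, h6, h7⟩ := ih (fun n hn => h n (List.mem_cons_of_mem a hn)) htne
      rw [Mcf_cons00, Mcf_cons01, Mcf_cons10, Mcf_cons11]
      refine ⟨by nlinarith, by nlinarith, h1, by omega, by nlinarith, h5, by nlinarith⟩

lemma cfEval_eq (ns : List ℤ) (h : ∀ n ∈ ns, 1 ≤ n) :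
    cfEval ns = (Mcf ns 0 0 : ℚ) / (Mcf ns 1 0 : ℚ) := by
  induction ns with
  | nil => simp [cfEval, Mcf, Matrix.one_apply]
  | cons a t ih =>
    have ht := ih (fun n hn => h n (List.mem_cons_of_mem a hn))
    rcases eq_or_ne t [] with rfl | htne
    · simp [cfEval, Mcf, Matrix.mul_apply, Fin.sum_univ_two]
    · obtain ⟨h1, _, h3, _⟩ := Mcf_pos t (fun n hn => h n (List.mem_cons_of_mem a hn)) htne
      have h1' : (Mcf t 0 0 : ℚ) ≠ 0 := by exact_mod_cast (by omega : Mcf t 0 0 ≠ 0)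
      rw [cfEval, ht, one_div_div, Mcf_cons00, Mcf_cons10]
      push_cast
      field_simp

/-- Remark 3.3, second part: if `m/x = n₁ + 1/(n₂ + 1/(⋯ + 1/n_l))` is a regular
continued fraction expansion with all `nⱼ ≥ 1` and `y < m` is the unique positive
integer with `x y ≡ (-1)^(l+1) (mod m)`, then `m/y = n_l + 1/(n_{l-1} + 1/(⋯ + 1/n₁))`. -/
theorem regular_cf_reverse (m x y : ℤ) (hm : 2 ≤ m)
    (hx0 : 0 < x) (hxm : x < m) (hcop : Int.gcd x m = 1)
    (ns : List ℤ) (hns : ∀ n ∈ ns, 1 ≤ n) (hcf : cfEval ns = (m : ℚ) / (x : ℚ))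
    (hy0 : 0 < y) (hym : y < m) (hxy : m ∣ x * y - (-1) ^ (ns.length + 1)) :
    cfEval ns.reverse = (m : ℚ) / (y : ℚ) := by
  -- ns is nonempty
  have hne : ns ≠ [] := by
    rintro rfl
    rw [cfEval] at hcf
    have hx' : (0:ℚ) < (m:ℚ) / (x:ℚ) := by
      apply div_pos <;> exact_mod_cast (by omega : (0:ℤ) < _)
    rw [← hcf] at hx'
    exact lt_irrefl 0 hx'
  obtain ⟨h1, h2, h3, h4, h5, h6, h7⟩ := Mcf_pos ns hns hne
  set p := Mcf ns 0 0 with hp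
  set q := Mcf ns 1 0 with hq
  set r := Mcf ns 0 1 with hr
  set s := Mcf ns 1 1 with hs
  have hdet : p * s - r * q = (-1) ^ ns.length := by
    have := Mcf_det ns
    rw [Matrix.det_fin_two] at this
    linarith [this]
  -- From cfEval: p * x = m * q
  have hpq : cfEval ns = (p:ℚ)/(q:ℚ) := cfEval_eq ns hns
  have hq0 : (q:ℚ) ≠ 0 := by exact_mod_cast (by omega : q ≠ 0)
  have hx0' : (x:ℚ) ≠ 0 := by exact_mod_cast (by omega : x ≠ 0)
  have hkey : p * x = m * q := by
    have : (p:ℚ) / q = (m:ℚ) / x := by rw [← hpq, hcf]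
    rw [div_eq_div_iff hq0 hx0'] at this
    exact_mod_cast this
  -- gcd p q = 1
  have hcop2 : IsCoprime p q := by
    rcases Nat.even_or_odd ns.length with he | ho
    · exact ⟨s, -r, by rw [Even.neg_one_pow he] at hdet; linear_combination hdet⟩
    · exact ⟨-s, r, by rw [Odd.neg_one_pow ho] at hdet; linear_combination -hdet⟩
  have hcopxm : IsCoprime x m := Int.isCoprime_iff_gcd_eq_one.mpr hcop
  -- q = x and p = m
  have hqx : q = x := by
    have hqdx : q ∣ x := by
      have : q ∣ p * x := ⟨m, by linarith⟩
      exact (hcop2.symm.dvd_of_dvd_mul_left this)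
    have hxdq : x ∣ q := by
      have : x ∣ m * q := ⟨p, by linarith⟩
      exact (hcopxm.dvd_of_dvd_mul_left this)
    exact Int.dvd_antisymm (by omega) (by omega) hqdx hxdq
  have hpm : p = m := by
    rw [hqx] at hkey
    exact mul_right_cancel₀ (by omega : x ≠ 0) hkey
  -- det: m * s - r * x = (-1)^l
  rw [hpm, hqx] at hdet
  -- r < m
  have hrm : r < m := by
    rw [hpm] at h5
    rcases lt_or_eq_of_le h5 with h | h
    · exact h
    · exfalso
      rw [h] at hdet
      have hdvd1 : m ∣ (-1 : ℤ) ^ ns.length := ⟨s - x, by linarith⟩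
      have hdvd2 : m ∣ 1 := by
        rcases Nat.even_or_odd ns.length with he | ho
        · rwa [Even.neg_one_pow he] at hdvd1
        · rw [Odd.neg_one_pow ho] at hdvd1
          exact (dvd_neg.mp hdvd1)
      have := Int.le_of_dvd one_pos hdvd2
      omega
  -- y = r
  have hyr : y = r := by
    have hxy2 : m ∣ x * r - (-1) ^ (ns.length + 1) := by
      refine ⟨s, ?_⟩
      have : ((-1:ℤ)) ^ (ns.length + 1) = -(-1)^ns.length := by ring
      rw [this]; linarith
    have hdiff : m ∣ x * (y - r) := by
      have := dvd_sub hxy hxy2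
      have heq : x * y - (-1) ^ (ns.length + 1) - (x * r - (-1) ^ (ns.length + 1)) = x * (y - r) := by ring
      rwa [heq] at this
    have hdvd : m ∣ y - r := hcopxm.symm.dvd_of_dvd_mul_left hdiff
    by_contra hne0
    have habs : 0 < |y - r| := abs_pos.mpr (by omega)
    have := Int.le_of_dvd habs ((dvd_abs m (y - r)).mpr hdvd)
    have : |y - r| < m := by rw [abs_lt]; omega
    omega
  -- conclude
  have hrevmem : ∀ n ∈ ns.reverse, 1 ≤ n := fun n hn => hns n (List.mem_reverse.mp hn)
  have e1 : Mcf ns.reverse 0 0 = p := by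
    rw [Mcf_reverse, Matrix.transpose_apply, ← hp]
  have e2 : Mcf ns.reverse 1 0 = r := by
    rw [Mcf_reverse, Matrix.transpose_apply, ← hr]
  rw [cfEval_eq ns.reverse hrevmem, e1, e2, hpm, ← hyr]
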